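/- arXiv:1211.3144 — 2 statements merged into one kernel-verified Lean document; each statement's English description precedes it below -/
import Mathlib

section
/- In BS(1,m) = ⟨a,b | bab⁻¹ = aᵐ⟩ with m ≥ 2, for every nonzero integer r the word length of aʳ satisfies (1/2)·log_m|r| ≤ |aʳ| ≤ (m+2)·log_m|r| + m/2 + 1. -/
/-- The relator of the solvable Baumslag–Solitar group `BS(1,m)`:
`b a b⁻¹ a⁻ᵐ`, in the free group on two generators (`0 ↦ a`, `1 ↦ b`). -/
def BSrel (m : ℕ) : Set (FreeGroup (Fin 2)) :=
  {FreeGroup.of 1 * FreeGroup.of 0 * (FreeGroup.of 1)⁻¹ * (FreeGroup.of 0 ^ m)⁻¹}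

/-- The Baumslag–Solitar group `BS(1,m) = ⟨a, b ∣ b a b⁻¹ = aᵐ⟩`. -/
abbrev BS (m : ℕ) := PresentedGroup (BSrel m)

/-- The generator `a` of `BS(1,m)`. -/
def aBS (m : ℕ) : BS m := PresentedGroup.of 0

/-- The generator `b` of `BS(1,m)`. -/
def bBS (m : ℕ) : BS m := PresentedGroup.of 1

/-- The generating set `{a, b}` of `BS(1,m)`. -/
def genBS (m : ℕ) : Set (BS m) := {aBS m, bBS m}

/-- Word length of `g` with respect to a generating set `S`. -/
noncomputable def wordLength {G : Type*} [Group G] (S : Set G) (g : G) : ℕ :=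
  sInf {n | ∃ l : List G, (∀ x ∈ l, x ∈ S ∨ x⁻¹ ∈ S) ∧ l.prod = g ∧ l.length = n}


/-- Affine group over ℝ: `⟨u, v⟩` represents `x ↦ u x + v`. -/
@[ext] structure Aff where
  u : ℝˣ
  v : ℝ

namespace Aff

instance : Mul Aff := ⟨fun x y => ⟨x.u * y.u, x.v + (x.u : ℝ) * y.v⟩⟩
instance : One Aff := ⟨⟨1, 0⟩⟩
instance : Inv Aff := ⟨fun x => ⟨x.u⁻¹, -(((x.u⁻¹ : ℝˣ) : ℝ) * x.v)⟩⟩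

@[simp] lemma mul_u (x y : Aff) : (x * y).u = x.u * y.u := rfl
@[simp] lemma mul_v (x y : Aff) : (x * y).v = x.v + (x.u : ℝ) * y.v := rfl
@[simp] lemma one_u : (1 : Aff).u = 1 := rfl
@[simp] lemma one_v : (1 : Aff).v = 0 := rfl
@[simp] lemma inv_u (x : Aff) : (x⁻¹).u = x.u⁻¹ := rfl
@[simp] lemma inv_v (x : Aff) : (x⁻¹).v = -(((x.u⁻¹ : ℝˣ) : ℝ) * x.v) := rfl

instance : Group Aff :=
  Group.ofLeftAxioms
    (fun a b c => by ext <;> simp [mul_assoc, mul_add, add_assoc] <;> ring)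
    (fun a => by ext <;> simp)
    (fun a => by ext <;> simp)

end Aff

lemma relBS (m : ℕ) : bBS m * aBS m * (bBS m)⁻¹ = aBS m ^ m := by
  have h : (FreeGroup.of 1 * FreeGroup.of 0 * (FreeGroup.of 1)⁻¹ *
      ((FreeGroup.of 0 : FreeGroup (Fin 2)) ^ m)⁻¹) ∈ Subgroup.normalClosure (BSrel m) :=
    Subgroup.subset_normalClosure rfl
  have h2 : PresentedGroup.mk (BSrel m) (FreeGroup.of 1 * FreeGroup.of 0 * (FreeGroup.of 1)⁻¹ *
      ((FreeGroup.of 0 : FreeGroup (Fin 2)) ^ m)⁻¹) = 1 := by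
    rwa [← QuotientGroup.eq_one_iff] at h
  have := h2
  simp only [map_mul, map_inv, map_pow] at this
  exact mul_inv_eq_one.mp this

lemma rel_zpow (m : ℕ) (q : ℤ) : bBS m * aBS m ^ q * (bBS m)⁻¹ = aBS m ^ (m * q) := by
  have : bBS m * aBS m ^ q * (bBS m)⁻¹ = (MulAut.conj (bBS m)) (aBS m ^ q) := by
    simp [MulAut.conj_apply, mul_assoc]
  rw [this, map_zpow, MulAut.conj_apply, relBS, ← zpow_natCast, ← zpow_mul]

/-- the images of the generators in the affine group -/
noncomputable def affGen (m : ℕ) (hm : (m : ℝ) ≠ 0) : Fin 2 → Aff :=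
  fun i => if i = 0 then ⟨1, 1⟩ else ⟨Units.mk0 (m : ℝ) hm, 0⟩

lemma affA_pow (n : ℕ) : (⟨1, 1⟩ : Aff) ^ n = ⟨1, n⟩ := by
  induction n with
  | zero => ext <;> simp
  | succ k ih => rw [pow_succ, ih]; ext <;> simp <;> push_cast <;> ring

lemma aff_rel (m : ℕ) (hm : (m : ℝ) ≠ 0) :
    ∀ r ∈ BSrel m, FreeGroup.lift (affGen m hm) r = 1 := by
  intro r hr
  rw [BSrel, Set.mem_singleton_iff] at hr
  subst hr
  simp only [map_mul, map_inv, map_pow, FreeGroup.lift_apply_of, affGen]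
  norm_num
  rw [affA_pow]
  ext <;> simp

noncomputable def affHom (m : ℕ) (hm : (m : ℝ) ≠ 0) : BS m →* Aff :=
  PresentedGroup.toGroup (aff_rel m hm)

lemma affHom_a (m : ℕ) (hm : (m : ℝ) ≠ 0) : affHom m hm (aBS m) = ⟨1, 1⟩ := by
  rw [affHom, aBS, PresentedGroup.toGroup.of]; simp [affGen]

lemma affHom_b (m : ℕ) (hm : (m : ℝ) ≠ 0) :
    affHom m hm (bBS m) = ⟨Units.mk0 (m : ℝ) hm, 0⟩ := by
  rw [affHom, bBS, PresentedGroup.toGroup.of]; simp [affGen]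

lemma affA_zpow (r : ℤ) : (⟨1, 1⟩ : Aff) ^ r = ⟨1, r⟩ := by
  cases r with
  | ofNat n => rw [Int.ofNat_eq_coe, zpow_natCast, affA_pow]; norm_num
  | negSucc n =>
      rw [zpow_negSucc, affA_pow]
      ext
      · simp
      · show -((((1 : ℝˣ)⁻¹ : ℝˣ) : ℝ) * ((n : ℕ) + 1 : ℕ)) = ((Int.negSucc n : ℤ) : ℝ)
        push_cast
        ring

lemma affHom_apow (m : ℕ) (hm : (m : ℝ) ≠ 0) (r : ℤ) :
    affHom m hm (aBS m ^ r) = ⟨1, r⟩ := by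
  rw [map_zpow, affHom_a, affA_zpow]

lemma gen_cases {m : ℕ} {x : BS m} (h : x ∈ genBS m ∨ x⁻¹ ∈ genBS m) :
    x = aBS m ∨ x = bBS m ∨ x = (aBS m)⁻¹ ∨ x = (bBS m)⁻¹ := by
  rcases h with h | h
  · rcases h with h | h
    · exact Or.inl h
    · exact Or.inr (Or.inl h)
  · rcases h with h | h
    · exact Or.inr (Or.inr (Or.inl (by rw [← h, inv_inv])))
    · exact Or.inr (Or.inr (Or.inr (by rw [← h, inv_inv])))

lemma gen_phi {m : ℕ} (hm : (m : ℝ) ≠ 0) {x : BS m} (h : x ∈ genBS m ∨ x⁻¹ ∈ genBS m) :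
    ∃ e : ℤ, |e| ≤ 1 ∧ ((affHom m hm x).u : ℝ) = (m : ℝ) ^ e ∧ |(affHom m hm x).v| ≤ 1 := by
  rcases gen_cases h with h | h | h | h <;> subst h
  · exact ⟨0, by simp, by simp [affHom_a], by simp [affHom_a]⟩
  · exact ⟨1, by simp, by simp [affHom_b], by simp [affHom_b]⟩
  · refine ⟨0, by simp, ?_, ?_⟩ <;> simp [map_inv, affHom_a]
  · refine ⟨-1, by simp, ?_, ?_⟩ <;> simp [map_inv, affHom_b]

lemma lower_aux {m : ℕ} (hm2 : 2 ≤ m) (hm : (m : ℝ) ≠ 0) (l : List (BS m))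
    (hl : ∀ x ∈ l, x ∈ genBS m ∨ x⁻¹ ∈ genBS m) :
    ∃ k : ℤ, |k| ≤ l.length ∧ ((affHom m hm l.prod).u : ℝ) = (m : ℝ) ^ k ∧
      |(affHom m hm l.prod).v| ≤ (l.length : ℝ) * (m : ℝ) ^ l.length := by
  have hm1 : (1 : ℝ) ≤ (m : ℝ) := by exact_mod_cast Nat.one_le_of_lt hm2
  induction l with
  | nil => exact ⟨0, by simp, by simp, by simp⟩
  | cons g t ih =>
      obtain ⟨k, hk, hu, hv⟩ := ih (fun x hx => hl x (List.mem_cons_of_mem g hx))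
      obtain ⟨e, he, hue, hve⟩ := gen_phi hm (hl g (List.mem_cons_self))
      set n := t.length
      refine ⟨e + k, ?_, ?_, ?_⟩
      · simp only [List.length_cons]
        push_cast
        calc |e + k| ≤ |e| + |k| := abs_add_le e k
          _ ≤ 1 + n := by exact add_le_add he hk
          _ = (n : ℤ) + 1 := by ring
      · rw [List.prod_cons, map_mul, Aff.mul_u, Units.val_mul, hu, hue, ← zpow_add₀ hm]
      · rw [List.prod_cons, map_mul, Aff.mul_v, List.length_cons]
        have hmn : (0:ℝ) < (m:ℝ) ^ n := by positivity
        have h1 : ((affHom m hm g).u : ℝ) ≤ (m : ℝ) := by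
          rw [hue]
          calc (m:ℝ) ^ e ≤ (m:ℝ) ^ (1:ℤ) := by
                apply zpow_le_zpow_right₀ hm1 (le_of_abs_le he)
            _ = m := zpow_one _
        have h2 : |(affHom m hm g).v + ((affHom m hm g).u : ℝ) * (affHom m hm (t.prod)).v| ≤
            1 + (m:ℝ) * ((n:ℝ) * (m:ℝ)^n) := by
          refine (abs_add_le _ _).trans (add_le_add hve ?_)
          rw [abs_mul]
          have hupos : (0:ℝ) ≤ ((affHom m hm g).u : ℝ) := by rw [hue]; positivity
          rw [abs_of_nonneg hupos]
          exact mul_le_mul h1 hv (abs_nonneg _) (by linarith)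
        refine h2.trans ?_
        push_cast
        have : (m:ℝ) * ((n:ℝ) * (m:ℝ)^n) = (n:ℝ) * (m:ℝ)^(n+1) := by ring
        rw [this]
        have h3 : (1:ℝ) ≤ (m:ℝ)^(n+1) := one_le_pow₀ hm1
        nlinarith [Nat.cast_nonneg (α := ℝ) n]

lemma word_small (m : ℕ) (c : ℤ) :
    ∃ l : List (BS m), (∀ x ∈ l, x ∈ genBS m ∨ x⁻¹ ∈ genBS m) ∧
      l.prod = aBS m ^ c ∧ l.length = c.natAbs := by
  refine ⟨List.replicate c.natAbs (if 0 ≤ c then aBS m else (aBS m)⁻¹), ?_, ?_, by simp⟩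
  · intro x hx
    rw [List.eq_of_mem_replicate hx]
    split
    · exact Or.inl (Or.inl rfl)
    · exact Or.inr (by rw [inv_inv]; exact Or.inl rfl)
  · rw [List.prod_replicate]
    by_cases h : 0 ≤ c
    · rw [if_pos h, ← zpow_natCast, Int.natAbs_of_nonneg h]
    · rw [if_neg h, inv_pow, ← zpow_natCast, ← zpow_neg]
      congr 1
      omega

lemma upper_aux (m : ℕ) (hm : 2 ≤ m) : ∀ j : ℕ, ∀ r : ℤ, |r| ≤ (m : ℤ) ^ j →
    ∃ l : List (BS m), (∀ x ∈ l, x ∈ genBS m ∨ x⁻¹ ∈ genBS m) ∧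
      l.prod = aBS m ^ r ∧ l.length ≤ (m / 2 + 2) * j + 1 := by
  intro j
  induction j with
  | zero =>
      intro r hr
      simp only [pow_zero] at hr
      rw [abs_le] at hr
      obtain ⟨l, h1, h2, h3⟩ := word_small m r
      exact ⟨l, h1, h2, by omega⟩
  | succ j ih =>
      intro r hr
      have hm0 : (0 : ℤ) < (m : ℤ) := by exact_mod_cast Nat.lt_of_lt_of_le Nat.zero_lt_two hm
      set h : ℤ := ((m / 2 : ℕ) : ℤ) with hh
      set q : ℤ := (r + h) / m with hq
      set c : ℤ := r - m * q with hc
      have hdm : (m : ℤ) * q + (r + h) % m = r + h := Int.mul_ediv_add_emod (r + h) m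
      have hs0 : 0 ≤ (r + h) % m := Int.emod_nonneg _ (by omega)
      have hs1 : (r + h) % m < m := Int.emod_lt_of_pos _ hm0
      have h2h : (m : ℤ) - 1 ≤ 2 * h := by
        rw [hh]
        have := Nat.div_add_mod m 2
        omega
      have hcs : c = (r + h) % m - h := by rw [hc]; linarith [hdm]
      have hcabs : c.natAbs ≤ m / 2 := by omega
      have hP : (m : ℤ) ^ (j + 1) = (m : ℤ) * (m : ℤ) ^ j := by rw [pow_succ]; ring
      have hhm' : h < (m : ℤ) := by omega
      have hh0 : (0 : ℤ) ≤ h := by positivity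
      have habs := abs_le.mp hr
      have hqu : q ≤ (m : ℤ) ^ j := by
        have h1 : (m : ℤ) * q < (m : ℤ) * ((m : ℤ) ^ j + 1) := by
          have h2 : (m : ℤ) * ((m : ℤ) ^ j + 1) = (m : ℤ) ^ (j + 1) + m := by rw [hP]; ring
          linarith [hdm, hs0, habs.2]
        exact Int.lt_add_one_iff.mp (lt_of_mul_lt_mul_left h1 (le_of_lt hm0))
      have hql : -(m : ℤ) ^ j ≤ q := by
        have h1 : (m : ℤ) * (-(m : ℤ) ^ j - 1) < (m : ℤ) * q := by
          have h2 : (m : ℤ) * (-(m : ℤ) ^ j - 1) = -(m : ℤ) ^ (j + 1) - m := by rw [hP]; ring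
          linarith [hdm, hs1, habs.1]
        have h3 := lt_of_mul_lt_mul_left h1 (le_of_lt hm0)
        omega
      have hqbound : |q| ≤ (m : ℤ) ^ j := abs_le.mpr ⟨hql, hqu⟩
      obtain ⟨lq, hq1, hq2, hq3⟩ := ih q hqbound
      obtain ⟨lc, hc1, hc2, hc3⟩ := word_small m c
      refine ⟨lc ++ bBS m :: (lq ++ [(bBS m)⁻¹]), ?_, ?_, ?_⟩
      · intro x hx
        simp only [List.mem_append, List.mem_cons, List.not_mem_nil, or_false] at hx
        rcases hx with hx | hx | hx | hx
        · exact hc1 x hx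
        · exact Or.inl (Or.inr (by rw [hx]; rfl))
        · exact hq1 x hx
        · exact Or.inr (by rw [hx, inv_inv]; exact Or.inr rfl)
      · rw [List.prod_append, List.prod_cons, List.prod_append, List.prod_singleton,
          hc2, hq2]
        rw [show aBS m ^ c * (bBS m * (aBS m ^ q * (bBS m)⁻¹)) =
          aBS m ^ c * (bBS m * aBS m ^ q * (bBS m)⁻¹) by group]
        rw [rel_zpow, ← zpow_add]
        congr 1
        rw [hc]; ring
      · simp only [List.length_append, List.length_cons, List.length_nil, hc3]
        have hrw : (m / 2 + 2) * (j + 1) = (m / 2 + 2) * j + (m / 2 + 2) := by ring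
        rw [hrw]
        generalize hK : (m / 2 + 2) * j = K at hq3 ⊢
        omega

lemma wordLength_le_of (m : ℕ) (hm : 2 ≤ m) (r : ℤ) (j : ℕ) (h : |r| ≤ (m : ℤ) ^ j) :
    wordLength (genBS m) (aBS m ^ r) ≤ (m / 2 + 2) * j + 1 := by
  obtain ⟨l, h1, h2, h3⟩ := upper_aux m hm j r h
  exact le_trans (Nat.sInf_le ⟨l, h1, h2, rfl⟩) h3

lemma wordLength_mem (m : ℕ) (hm : 2 ≤ m) (r : ℤ) :
    ∃ l : List (BS m), (∀ x ∈ l, x ∈ genBS m ∨ x⁻¹ ∈ genBS m) ∧ l.prod = aBS m ^ r ∧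
      l.length = wordLength (genBS m) (aBS m ^ r) := by
  have hj : |r| ≤ (m : ℤ) ^ r.natAbs := by
    have h1 : r.natAbs < 2 ^ r.natAbs := Nat.lt_two_pow_self
    have h2 : 2 ^ r.natAbs ≤ m ^ r.natAbs := Nat.pow_le_pow_left hm _
    have h3 : r.natAbs ≤ m ^ r.natAbs := by omega
    calc |r| = (r.natAbs : ℤ) := Int.abs_eq_natAbs r
      _ ≤ ((m ^ r.natAbs : ℕ) : ℤ) := by exact_mod_cast h3
      _ = (m : ℤ) ^ r.natAbs := by push_cast; ring
  obtain ⟨l, h1, h2, _⟩ := upper_aux m hm r.natAbs r hj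
  have hne : {n | ∃ l : List (BS m), (∀ x ∈ l, x ∈ genBS m ∨ x⁻¹ ∈ genBS m) ∧
      l.prod = aBS m ^ r ∧ l.length = n}.Nonempty := ⟨l.length, l, h1, h2, rfl⟩
  obtain ⟨l', h1', h2', h3'⟩ := Nat.sInf_mem hne
  exact ⟨l', h1', h2', h3'⟩

lemma lower_final (m : ℕ) (hm : 2 ≤ m) (r : ℤ) (hr : r ≠ 0) :
    (1 / 2 : ℝ) * Real.logb m |(r : ℝ)| ≤ (wordLength (genBS m) (aBS m ^ r) : ℝ) := by
  obtain ⟨l, h1, h2, h3⟩ := wordLength_mem m hm r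
  have hmne : ((m : ℝ)) ≠ 0 := by positivity
  have hm1 : (1 : ℝ) < (m : ℝ) := by exact_mod_cast hm.trans_lt' one_lt_two
  obtain ⟨k, hk, hu, hv⟩ := lower_aux hm hmne l h1
  rw [h2, affHom_apow] at hv
  have hv' : |(r : ℝ)| ≤ (l.length : ℝ) * (m : ℝ) ^ l.length := hv
  set n := l.length with hn
  have hrpos : (0 : ℝ) < |(r : ℝ)| := by
    simp only [abs_pos]
    exact_mod_cast hr
  have hnn : (n : ℝ) ≤ (m : ℝ) ^ n := by
    have h1' : n < 2 ^ n := Nat.lt_two_pow_self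
    have h2' : 2 ^ n ≤ m ^ n := Nat.pow_le_pow_left hm _
    have : n ≤ m ^ n := by omega
    exact_mod_cast this
  have hle : |(r : ℝ)| ≤ (m : ℝ) ^ (2 * n) := by
    calc |(r : ℝ)| ≤ (n : ℝ) * (m : ℝ) ^ n := hv'
      _ ≤ (m : ℝ) ^ n * (m : ℝ) ^ n := by
          apply mul_le_mul_of_nonneg_right hnn (by positivity)
      _ = (m : ℝ) ^ (2 * n) := by rw [← pow_add]; ring_nf
  have hlogb : Real.logb m |(r : ℝ)| ≤ 2 * n := by
    calc Real.logb m |(r : ℝ)| ≤ Real.logb m ((m : ℝ) ^ (2 * n)) :=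
          Real.logb_le_logb_of_le hm1 hrpos hle
      _ = (2 * n : ℕ) * Real.logb m m := Real.logb_pow m m (2*n)
      _ = 2 * n := by rw [Real.logb_self_eq_one hm1]; push_cast; ring
  rw [← h3]
  linarith

lemma nat_sq_le_two_pow (m : ℕ) : m ^ 2 ≤ 2 ^ (m + 2) := by
  induction m with
  | zero => norm_num
  | succ k ih =>
      have h1 : k < 2 ^ k := Nat.lt_two_pow_self
      have h2 : 2 ^ (k + 1 + 2) = 4 * 2 ^ k * 2 := by ring
      have h3 : 2 ^ (k + 2) = 4 * 2 ^ k := by ring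
      rw [h3] at ih
      have h4 : (k + 1) ^ 2 = k ^ 2 + 2 * k + 1 := by ring
      rw [h2, h4]
      nlinarith

lemma logb_two_ge (m : ℕ) (hm : 2 ≤ m) : 2 ≤ ((m : ℝ) + 2) * Real.logb m 2 := by
  have hm1 : (1 : ℝ) < (m : ℝ) := by exact_mod_cast hm.trans_lt' one_lt_two
  have hlm : (0 : ℝ) < Real.log m := Real.log_pos hm1
  have hkey : 2 * Real.log m ≤ ((m : ℝ) + 2) * Real.log 2 := by
    have h1 : ((m : ℝ)) ^ 2 ≤ (2 : ℝ) ^ (m + 2) := by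
      exact_mod_cast nat_sq_le_two_pow m
    have h2 : Real.log ((m : ℝ) ^ 2) ≤ Real.log ((2 : ℝ) ^ (m + 2)) :=
      Real.log_le_log (by positivity) h1
    rw [Real.log_pow, Real.log_pow] at h2
    push_cast at h2
    linarith
  rw [Real.logb, mul_div_assoc', le_div_iff₀ hlm]
  linarith

lemma upper_final (m : ℕ) (hm : 2 ≤ m) (r : ℤ) (hr : r ≠ 0) :
    (wordLength (genBS m) (aBS m ^ r) : ℝ) ≤
      ((m : ℝ) + 2) * Real.logb m |(r : ℝ)| + (m : ℝ) / 2 + 1 := by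
  have hm1 : (1 : ℝ) < (m : ℝ) := by exact_mod_cast hm.trans_lt' one_lt_two
  have hmR : (2 : ℝ) ≤ (m : ℝ) := by exact_mod_cast hm
  set n0 := r.natAbs with hn0
  have hn01 : 1 ≤ n0 := by omega
  have habsr : |r| = (n0 : ℤ) := Int.abs_eq_natAbs r
  have habs : |(r : ℝ)| = (n0 : ℝ) := by
    rw [← Int.cast_abs, habsr]
    push_cast
    ring
  set L := Real.logb m |(r : ℝ)| with hL
  have hL0 : 0 ≤ L := by
    rw [hL, habs]
    exact Real.logb_nonneg hm1 (by exact_mod_cast hn01)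
  set f : ℝ := ((m / 2 : ℕ) : ℝ) with hf
  have hf1 : 2 * f ≤ (m : ℝ) := by
    rw [hf]
    exact_mod_cast (by omega : 2 * (m / 2) ≤ m)
  have hf2 : (m : ℝ) ≤ 2 * f + 1 := by
    rw [hf]
    exact_mod_cast (by omega : m ≤ 2 * (m / 2) + 1)
  by_cases hone : n0 = 1
  · -- |r| = 1
    have hw : wordLength (genBS m) (aBS m ^ r) ≤ 1 := by
      have := wordLength_le_of m hm r 0 (by rw [habsr, hone]; norm_num)
      simpa using this
    have : (wordLength (genBS m) (aBS m ^ r) : ℝ) ≤ 1 := by exact_mod_cast hw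
    nlinarith
  · -- n0 ≥ 2
    have hn02 : 2 ≤ n0 := by omega
    set J := Nat.log m n0 with hJ
    have hJ1 : m ^ J ≤ n0 := Nat.pow_log_le_self m (by omega)
    have hJ2 : n0 < m ^ (J + 1) := Nat.lt_pow_succ_log_self (by omega) n0
    have hLJ : (J : ℝ) ≤ L := by
      rw [hL, habs]
      calc (J : ℝ) = Real.logb m ((m : ℝ) ^ J) := by
            rw [Real.logb_pow, Real.logb_self_eq_one hm1, mul_one]
        _ ≤ Real.logb m (n0 : ℝ) := by
            apply Real.logb_le_logb_of_le hm1 (by positivity)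
            exact_mod_cast hJ1
    have hL2 : Real.logb m 2 ≤ L := by
      rw [hL, habs]
      exact Real.logb_le_logb_of_le hm1 (by norm_num) (by exact_mod_cast hn02)
    by_cases heq : n0 = m ^ J
    · -- exact power
      have hw := wordLength_le_of m hm r J (by rw [habsr]; exact_mod_cast heq.le)
      have hwR : (wordLength (genBS m) (aBS m ^ r) : ℝ) ≤ f * J + 2 * J + 1 := by
        calc (wordLength (genBS m) (aBS m ^ r) : ℝ) ≤ (((m / 2 + 2) * J + 1 : ℕ) : ℝ) := by
              exact_mod_cast hw
          _ = f * J + 2 * J + 1 := by push_cast; ring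
      have hmul : (f + 2) * (J : ℝ) ≤ ((m : ℝ) + 2) * L :=
        mul_le_mul (by linarith) hLJ (by positivity) (by linarith)
      nlinarith
    · -- m ^ J < n0
      have hJlt : m ^ J < n0 := lt_of_le_of_ne hJ1 (fun h => heq h.symm)
      have hw := wordLength_le_of m hm r (J + 1)
        (by rw [habsr]; exact_mod_cast le_of_lt hJ2)
      have hwR : (wordLength (genBS m) (aBS m ^ r) : ℝ) ≤ (f + 2) * ((J : ℝ) + 1) + 1 := by
        calc (wordLength (genBS m) (aBS m ^ r) : ℝ) ≤ (((m / 2 + 2) * (J + 1) + 1 : ℕ) : ℝ) := by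
              exact_mod_cast hw
          _ = (f + 2) * ((J : ℝ) + 1) + 1 := by push_cast; ring
      rcases Nat.eq_zero_or_pos J with hJ0 | hJpos
      · -- J = 0
        rw [hJ0] at hwR
        simp only [Nat.cast_zero] at hwR
        have h2 := logb_two_ge m hm
        have h3 : ((m : ℝ) + 2) * Real.logb m 2 ≤ ((m : ℝ) + 2) * L :=
          mul_le_mul_of_nonneg_left hL2 (by linarith)
        nlinarith
      · by_cases hsp : m = 2 ∧ J = 1
        · -- special case m = 2, n0 = 3
          obtain ⟨hm2, hJ1'⟩ := hsp
          have hn03 : n0 = 3 := by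
            rw [hJ1', hm2] at hJlt hJ2; norm_num at hJlt hJ2; omega
          have hlogb : (5 / 4 : ℝ) ≤ L := by
            rw [hL, habs, hn03, hm2]
            have h32 : Real.log (32 : ℝ) ≤ Real.log (81 : ℝ) :=
              Real.log_le_log (by norm_num) (by norm_num)
            have e1 : Real.log (32 : ℝ) = 5 * Real.log 2 := by
              rw [show (32 : ℝ) = 2 ^ 5 by norm_num, Real.log_pow]; push_cast; ring
            have e2 : Real.log (81 : ℝ) = 4 * Real.log 3 := by
              rw [show (81 : ℝ) = 3 ^ 4 by norm_num, Real.log_pow]; push_cast; ring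
            have hl2 : (0 : ℝ) < Real.log 2 := Real.log_pos (by norm_num)
            have hc2 : ((2 : ℕ) : ℝ) = (2 : ℝ) := by norm_num
            have hc3 : ((3 : ℕ) : ℝ) = (3 : ℝ) := by norm_num
            rw [hc2, hc3, Real.logb, le_div_iff₀ hl2]
            linarith
          have hfm : f = 1 := by rw [hf, hm2]; norm_num
          have hmm : (m : ℝ) = 2 := by rw [hm2]; norm_num
          rw [hfm, hJ1'] at hwR
          norm_num at hwR
          have hwR' : (wordLength (genBS m) (aBS m ^ r) : ℝ) ≤ 7 := by exact_mod_cast hwR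
          rw [hmm]
          norm_num
          linarith
        · -- general case : J ≥ 2 or m ≥ 3
          have hkey : f + 2 ≤ ((m : ℝ) - f) * J + (m : ℝ) / 2 := by
            rcases Nat.lt_or_ge J 2 with hJlt2 | hJge2
            · -- J = 1, m ≥ 3
              have hJ1' : J = 1 := by omega
              have hm3 : 3 ≤ m := by
                rcases Nat.lt_or_ge m 3 with h | h
                · exfalso; exact hsp ⟨by omega, hJ1'⟩
                · exact h
              rw [hJ1', Nat.cast_one, mul_one]
              rcases Nat.even_or_odd m with ⟨t, ht⟩ | ⟨t, ht⟩
              · have hmt : m / 2 = t := by omega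
                have hft : f = t := by rw [hf, hmt]
                have htR : (m : ℝ) = t + t := by exact_mod_cast ht
                have ht2 : 2 ≤ t := by omega
                have ht2R : (2 : ℝ) ≤ (t : ℝ) := by exact_mod_cast ht2
                rw [hft, htR]; linarith
              · have hmt : m / 2 = t := by omega
                have hft : f = t := by rw [hf, hmt]
                have htR : (m : ℝ) = 2 * t + 1 := by exact_mod_cast ht
                have ht1 : 1 ≤ t := by omega
                have ht1R : (1 : ℝ) ≤ (t : ℝ) := by exact_mod_cast ht1
                rw [hft, htR]; linarith
            · -- J ≥ 2
              have hJ2R : (2 : ℝ) ≤ (J : ℝ) := by exact_mod_cast hJge2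
              have hmf : (m : ℝ) / 2 ≤ (m : ℝ) - f := by linarith
              have hp : ((m : ℝ) / 2) * 2 ≤ ((m : ℝ) - f) * J :=
                mul_le_mul hmf hJ2R (by norm_num) (by linarith)
              linarith
          have hmul : ((m : ℝ) + 2) * (J : ℝ) ≤ ((m : ℝ) + 2) * L :=
            mul_le_mul_of_nonneg_left hLJ (by linarith)
          nlinarith

/-- In `BS(1,m)` with `m ≥ 2`, for every nonzero integer `r`,
`(1/2)·log_m |r| ≤ |aʳ| ≤ (m+2)·log_m |r| + m/2 + 1`. -/
theorem stmt4 (m : ℕ) (hm : 2 ≤ m) (r : ℤ) (hr : r ≠ 0) :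
    (1 / 2 : ℝ) * Real.logb m |(r : ℝ)| ≤ (wordLength (genBS m) (aBS m ^ r) : ℝ) ∧
    (wordLength (genBS m) (aBS m ^ r) : ℝ) ≤
      ((m : ℝ) + 2) * Real.logb m |(r : ℝ)| + (m : ℝ) / 2 + 1 := by
  exact ⟨lower_final m hm r hr, upper_final m hm r hr⟩
end

section
/- Let M be a diagonalisable integer matrix with all eigenvalues of absolute value > 1 and i a nonzero integer. If u = t⁻ᵖu_a tᵖ, v = t⁻ᑫv_a tᑫ, x = t⁻ʸx_a tʸ lie in A ≤ Γ_M (with p, q, y the minimal non-negative exponents) and satisfy the twisted relation u·φ_M^i(x) = x·v, then in coordinate vectors 𝐱 = (Mⁱ − I)⁻¹ (M^{y−q}𝐯 − M^{y−p}𝐮); moreover y ≤ p + i and y ≤ q cannot both fail, i.e. we cannot have simultaneously y > q and y > p + i. -/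
open scoped BigOperators

/-- The relators of the abelian-by-cyclic group
`Γ_M = ⟨t, a₁, …, a_d ∣ [aᵢ,aⱼ] = 1, t aᵢ t⁻¹ = φ_M(aᵢ)⟩`, where the generator `t`
is indexed by `none` and the generators `aᵢ` by `some i`. -/
def GammaRels (d : ℕ) (M : Matrix (Fin d) (Fin d) ℤ) : Set (FreeGroup (Option (Fin d))) :=
  (⋃ (i : Fin d) (j : Fin d),
    {FreeGroup.of (some i) * FreeGroup.of (some j) *
      (FreeGroup.of (some i))⁻¹ * (FreeGroup.of (some j))⁻¹}) ∪
  (⋃ i : Fin d,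
    {FreeGroup.of none * FreeGroup.of (some i) * (FreeGroup.of none)⁻¹ *
      (((List.finRange d).map (fun j => FreeGroup.of (some j) ^ (M j i))).prod)⁻¹})

/-- The abelian-by-cyclic group `Γ_M`. -/
abbrev GammaM (d : ℕ) (M : Matrix (Fin d) (Fin d) ℤ) := PresentedGroup (GammaRels d M)

/-- The stable letter `t` of `Γ_M`. -/
def tG (d : ℕ) (M : Matrix (Fin d) (Fin d) ℤ) : GammaM d M := PresentedGroup.of none

/-- The generator `aᵢ` of `Γ_M`. -/
def aG (d : ℕ) (M : Matrix (Fin d) (Fin d) ℤ) (i : Fin d) : GammaM d M :=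
  PresentedGroup.of (some i)

/-- The element of `A₀ = ⟨a₁,…,a_d⟩ ≅ ℤᵈ` with exponent vector `x`. -/
def AG (d : ℕ) (M : Matrix (Fin d) (Fin d) ℤ) (x : Fin d → ℤ) : GammaM d M :=
  ((List.finRange d).map (fun i => aG d M i ^ (x i))).prod

namespace Stmt14Aux

open Matrix SemidirectProduct Multiplicative

variable {d : ℕ}

lemma charpoly_eval {R : Type*} [CommRing R] {n : Type*} [DecidableEq n] [Fintype n]
    (A : Matrix n n R) (r : R) : A.charpoly.eval r = ((Matrix.scalar n r) - A).det := by
  rw [Matrix.charpoly, _root_.eval_det, matPolyEquiv_charmatrix]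
  simp

lemma map_nonsing_inv {K L : Type*} [Field K] [Field L] (f : K →+* L)
    {n : Type*} [DecidableEq n] [Fintype n] (A : Matrix n n K) :
    (A⁻¹).map f = (A.map f)⁻¹ := by
  rw [Matrix.inv_def, Matrix.inv_def]
  have hadj : (A.adjugate).map f = (A.map f).adjugate := by
    simpa [RingHom.mapMatrix_apply] using f.map_adjugate A
  have hdet : f A.det = (A.map f).det := by
    simpa [RingHom.mapMatrix_apply] using f.map_det A
  ext i j
  simp [Matrix.map_apply, hadj.symm, ← hdet, Ring.inverse_eq_inv', map_inv₀,
    Matrix.smul_apply, smul_eq_mul]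

lemma map_zpow' {K L : Type*} [Field K] [Field L] (f : K →+* L)
    {n : Type*} [DecidableEq n] [Fintype n] (A : Matrix n n K) (z : ℤ) :
    (A ^ z).map f = (A.map f) ^ z := by
  have hpow : ∀ m : ℕ, (A ^ m).map f = (A.map f) ^ m := by
    intro m
    simpa [RingHom.mapMatrix_apply] using (f.mapMatrix : Matrix n n K →+* Matrix n n L).map_pow A m
  cases z with
  | ofNat m => simpa using hpow m
  | negSucc m => rw [zpow_negSucc, zpow_negSucc, map_nonsing_inv, hpow]

lemma diagonal_zpow {K : Type*} [Field K] {n : Type*} [DecidableEq n] [Fintype n]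
    (δ : n → K) (hδ : ∀ j, δ j ≠ 0) (z : ℤ) :
    (Matrix.diagonal δ) ^ z = Matrix.diagonal (fun j => δ j ^ z) := by
  cases z with
  | ofNat m => simp [Matrix.diagonal_pow]
  | negSucc m =>
      have h1 : (fun j => δ j ^ (Int.negSucc m)) = fun j => (δ j ^ (m + 1))⁻¹ := by
        funext j; rw [zpow_negSucc]
      rw [zpow_negSucc, Matrix.diagonal_pow, h1, Matrix.inv_eq_right_inv]
      rw [Matrix.diagonal_mul_diagonal]
      have h2 : (fun i => (δ ^ (m + 1)) i * (δ i ^ (m + 1))⁻¹) = fun _ => (1 : K) := by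
        funext j
        simp [mul_inv_cancel₀ (pow_ne_zero _ (hδ j))]
      rw [h2, Matrix.diagonal_one]

lemma eigen_abs {M : Matrix (Fin d) (Fin d) ℤ}
    (hdiag : ∃ P D : Matrix (Fin d) (Fin d) ℝ, IsUnit P ∧ D.IsDiag ∧
      M.map ((↑) : ℤ → ℝ) = P * D * P⁻¹)
    (heig : ∀ μ : ℂ, (M.map ((↑) : ℤ → ℂ)).charpoly.IsRoot μ → 1 < ‖μ‖)
    (i : ℤ) (hi : i ≠ 0) :
    (((M.map ((↑) : ℤ → ℝ)) ^ i - 1)).det ≠ 0 := by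
  obtain ⟨P, D, hP, hDdiag, hM⟩ := hdiag
  set δ : Fin d → ℝ := D.diag with hδdef
  have hD : Matrix.diagonal δ = D := hDdiag.diagonal_diag
  have hPdet : IsUnit P.det := (Matrix.isUnit_iff_isUnit_det P).mp hP
  have hPP : P * P⁻¹ = 1 := Matrix.mul_nonsing_inv P hPdet
  have hroot : ∀ j, (M.map ((↑) : ℤ → ℝ)).charpoly.IsRoot (δ j) := by
    intro j
    have hscalar : ∀ r : ℝ, Matrix.scalar (Fin d) r * P = P * Matrix.scalar (Fin d) r :=
      fun r => (Matrix.scalar_commute r (fun r' => mul_comm r r') P).eq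
    have key : Matrix.scalar (Fin d) (δ j) - M.map ((↑) : ℤ → ℝ)
        = P * (Matrix.scalar (Fin d) (δ j) - D) * P⁻¹ := by
      rw [hM, Matrix.mul_sub, Matrix.sub_mul]
      congr 1
      rw [← hscalar, Matrix.mul_assoc, hPP, Matrix.mul_one]
    have hzero : (Matrix.scalar (Fin d) (δ j) - D).det = 0 := by
      have hsd : Matrix.scalar (Fin d) (δ j) - D = Matrix.diagonal (fun k => δ j - δ k) := by
        rw [← hD]
        ext a b
        by_cases h : a = b <;>
          simp [Matrix.scalar_apply, Matrix.diagonal_apply, h, Matrix.one_apply]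
      rw [hsd, Matrix.det_diagonal]
      exact Finset.prod_eq_zero (Finset.mem_univ j) (sub_self _)
    show (M.map ((↑) : ℤ → ℝ)).charpoly.eval (δ j) = 0
    rw [charpoly_eval, key, Matrix.det_conj hP, hzero]
  have habs : ∀ j, 1 < |δ j| := by
    intro j
    have hcp := Matrix.charpoly_map (M.map ((↑) : ℤ → ℝ)) (algebraMap ℝ ℂ)
    have hmap : M.map ((↑) : ℤ → ℂ) = (M.map ((↑) : ℤ → ℝ)).map (algebraMap ℝ ℂ) := by
      have hc : (⇑(algebraMap ℝ ℂ) ∘ ((↑) : ℤ → ℝ)) = ((↑) : ℤ → ℂ) := by funext z; simp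
      rw [Matrix.map_map, hc]
    have hroot' : (M.map ((↑) : ℤ → ℂ)).charpoly.IsRoot ((δ j : ℝ) : ℂ) := by
      rw [hmap, hcp]
      exact (hroot j).map
    have := heig _ hroot'
    simpa using this
  have hδ0 : ∀ j, δ j ≠ 0 := by
    intro j h
    have := habs j
    rw [h, abs_zero] at this
    linarith
  have hDdet : IsUnit D.det := by
    rw [← hD, Matrix.det_diagonal]
    exact (Finset.prod_ne_zero_iff.mpr (fun j _ => hδ0 j)).isUnit
  have hDu : IsUnit D := (Matrix.isUnit_iff_isUnit_det D).mpr hDdet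
  have key : (M.map ((↑) : ℤ → ℝ)) ^ i - 1 = P * (D ^ i - 1) * P⁻¹ := by
    have hMu : M.map ((↑) : ℤ → ℝ)
        = ((hP.unit * hDu.unit * hP.unit⁻¹ : _ˣ) : Matrix (Fin d) (Fin d) ℝ) := by
      rw [Units.val_mul, Units.val_mul, hP.unit_spec, hDu.unit_spec, Matrix.coe_units_inv,
        hP.unit_spec, hM]
    have hpow : (M.map ((↑) : ℤ → ℝ)) ^ i
        = (((hP.unit * hDu.unit * hP.unit⁻¹ : _ˣ) ^ i : _ˣ) : Matrix (Fin d) (Fin d) ℝ) := by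
      rw [Matrix.coe_units_zpow, ← hMu]
    have hconj : (hP.unit * hDu.unit * hP.unit⁻¹ : _ˣ) ^ i
        = hP.unit * hDu.unit ^ i * hP.unit⁻¹ := by
      have := map_zpow (MulAut.conj hP.unit) hDu.unit i
      simpa [MulAut.conj_apply, mul_assoc] using this.symm
    rw [hpow, hconj, Units.val_mul, Units.val_mul, Matrix.coe_units_inv, hP.unit_spec,
      Matrix.coe_units_zpow, hDu.unit_spec, Matrix.mul_sub, Matrix.sub_mul]
    congr 1
    rw [Matrix.mul_one, hPP]
  rw [key, Matrix.det_conj hP]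
  have hDz : D ^ i = Matrix.diagonal (fun j => δ j ^ i) := by
    rw [← hD, diagonal_zpow δ hδ0]
  have hsub : D ^ i - 1 = Matrix.diagonal (fun j => δ j ^ i - 1) := by
    rw [hDz, ← Matrix.diagonal_one, Matrix.diagonal_sub]
  rw [hsub, Matrix.det_diagonal]
  refine Finset.prod_ne_zero_iff.mpr (fun j _ => ?_)
  intro h
  have h1 : δ j ^ i = 1 := by linarith [sub_eq_zero.mp h]
  have habsz : |δ j ^ i| = |δ j| ^ i := by
    cases i with
    | ofNat m => simp [abs_pow]
    | negSucc m => simp [zpow_negSucc, abs_inv, abs_pow]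
  have h2 : |δ j| ^ i = |δ j| ^ (0 : ℤ) := by
    rw [← habsz, h1]; simp
  exact hi (zpow_right_injective₀ (a := |δ j|)
    (lt_trans zero_lt_one (habs j)) (ne_of_gt (habs j)) h2)

def mulVecAut (U : (Matrix (Fin d) (Fin d) ℚ)ˣ) :
    MulAut (Multiplicative (Fin d → ℚ)) where
  toFun x := ofAdd ((U : Matrix (Fin d) (Fin d) ℚ).mulVec x.toAdd)
  invFun x := ofAdd (((U⁻¹ : _ˣ) : Matrix (Fin d) (Fin d) ℚ).mulVec x.toAdd)
  left_inv x := by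
    simp only [toAdd_ofAdd, Matrix.mulVec_mulVec, Units.inv_mul, Matrix.one_mulVec, ofAdd_toAdd]
  right_inv x := by
    simp only [toAdd_ofAdd, Matrix.mulVec_mulVec, Units.mul_inv, Matrix.one_mulVec, ofAdd_toAdd]
  map_mul' x y := by
    show ofAdd ((U : Matrix (Fin d) (Fin d) ℚ).mulVec (x * y).toAdd)
        = ofAdd ((U : Matrix (Fin d) (Fin d) ℚ).mulVec x.toAdd)
          * ofAdd ((U : Matrix (Fin d) (Fin d) ℚ).mulVec y.toAdd)
    rw [← ofAdd_add, toAdd_mul, Matrix.mulVec_add]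

def mulVecHom (d : ℕ) : (Matrix (Fin d) (Fin d) ℚ)ˣ →* MulAut (Multiplicative (Fin d → ℚ)) where
  toFun := mulVecAut
  map_one' := by
    ext x : 1
    show ofAdd _ = _
    simp only [Units.val_one, Matrix.one_mulVec]
    rfl
  map_mul' U V := by
    ext x : 1
    show ofAdd _ = ofAdd _
    simp only [Units.val_mul, ← Matrix.mulVec_mulVec]
    rfl

def phiU (U : (Matrix (Fin d) (Fin d) ℚ)ˣ) :
    Multiplicative ℤ →* MulAut (Multiplicative (Fin d → ℚ)) :=
  zpowersHom _ (mulVecHom d U)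

abbrev GG (U : (Matrix (Fin d) (Fin d) ℚ)ˣ) :=
  SemidirectProduct (Multiplicative (Fin d → ℚ)) (Multiplicative ℤ) (phiU U)

def fgen (U : (Matrix (Fin d) (Fin d) ℚ)ˣ) : Option (Fin d) → GG U
  | none => inr (ofAdd (1 : ℤ))
  | some j => inl (ofAdd (Pi.single j (1 : ℚ)))

lemma conj_pow (U : (Matrix (Fin d) (Fin d) ℚ)ˣ) (z : ℤ) (n : Multiplicative (Fin d → ℚ)) :
    (inr (ofAdd z) : GG U) * inl n * (inr (ofAdd z))⁻¹ =
      inl (ofAdd (((U ^ z : _ˣ) : Matrix (Fin d) (Fin d) ℚ).mulVec n.toAdd)) := by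
  rw [← map_inv, ← inl_aut]
  congr 1
  show (phiU U) (ofAdd z) n = _
  have h1 : (phiU U) (ofAdd z) = mulVecHom d (U ^ z) := by
    rw [phiU, zpowersHom_apply, toAdd_ofAdd, ← map_zpow]
  rw [h1]
  rfl

lemma sum_smul_single (c : Fin d → ℤ) :
    (∑ j : Fin d, (c j) • (Pi.single j (1 : ℚ) : Fin d → ℚ)) = fun k => (c k : ℚ) := by
  funext k
  rw [Finset.sum_apply]
  have h : ∀ j, ((c j) • (Pi.single j (1 : ℚ) : Fin d → ℚ)) k
      = (Pi.single j ((c j : ℚ)) : Fin d → ℚ) k := by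
    intro j
    by_cases hj : j = k
    · subst hj; simp
    · simp [Pi.single_apply, hj]
  simp_rw [h]
  exact Fintype.sum_pi_single k fun j => ((c j : ℚ))

lemma prod_inl_eq (U : (Matrix (Fin d) (Fin d) ℚ)ˣ) (c : Fin d → ℤ) :
    (((List.finRange d).map
        (fun j => (inl (ofAdd (Pi.single j (1 : ℚ))) : GG U) ^ (c j)))).prod =
      inl (ofAdd (fun k => (c k : ℚ))) := by
  have h1 : (fun j => (inl (ofAdd (Pi.single j (1 : ℚ))) : GG U) ^ (c j)) =
      (⇑(inl : Multiplicative (Fin d → ℚ) →* GG U)) ∘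
        (fun j => (ofAdd (Pi.single j (1 : ℚ))) ^ (c j)) := by
    funext j
    simp only [Function.comp_apply]
    rw [map_zpow]
  rw [h1, ← List.map_map, ← MonoidHom.map_list_prod]
  congr 1
  rw [← Fin.prod_univ_def]
  have h3 : ∀ j : Fin d, (ofAdd (Pi.single j (1 : ℚ)) : Multiplicative (Fin d → ℚ)) ^ (c j)
      = ofAdd ((c j) • (Pi.single j (1 : ℚ) : Fin d → ℚ)) := by
    intro j
    apply toAdd.injective
    rw [toAdd_zpow, toAdd_ofAdd, toAdd_ofAdd]
  simp_rw [h3]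
  rw [← ofAdd_sum, sum_smul_single]

lemma rels_eq (M : Matrix (Fin d) (Fin d) ℤ) (U : (Matrix (Fin d) (Fin d) ℚ)ˣ)
    (hU : (U : Matrix (Fin d) (Fin d) ℚ) = M.map ((↑) : ℤ → ℚ)) :
    ∀ r ∈ GammaRels d M, FreeGroup.lift (fgen U) r = 1 := by
  intro r hr
  simp only [GammaRels, Set.mem_union, Set.mem_iUnion, Set.mem_singleton_iff] at hr
  have h1 : (FreeGroup.lift (fgen U)) (FreeGroup.of (none : Option (Fin d)))
      = inr (ofAdd (1 : ℤ)) := by simp [fgen]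
  have h2 : ∀ a : Fin d, (FreeGroup.lift (fgen U)) (FreeGroup.of (some a))
      = inl (ofAdd (Pi.single a (1 : ℚ))) := by intro a; simp [fgen]
  rcases hr with ⟨a, b, rfl⟩ | ⟨a, rfl⟩
  · simp only [_root_.map_mul, map_inv, h2]
    have hc : (inl (ofAdd (Pi.single a (1 : ℚ))) : GG U) * inl (ofAdd (Pi.single b (1 : ℚ)))
        = inl (ofAdd (Pi.single b (1 : ℚ))) * inl (ofAdd (Pi.single a (1 : ℚ))) := by
      rw [← _root_.map_mul (inl : _ →* GG U), ← _root_.map_mul (inl : _ →* GG U)]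
      exact congrArg inl (mul_comm _ _)
    rw [hc]
    group
  · have hprod : (FreeGroup.lift (fgen U))
        (((List.finRange d).map (fun j => FreeGroup.of (some j) ^ (M j a))).prod)
        = inl (ofAdd (fun k => ((M k a : ℚ)))) := by
      rw [map_list_prod, List.map_map]
      have hfn : (⇑(FreeGroup.lift (fgen U)) ∘ fun j => FreeGroup.of (some j) ^ M j a)
          = fun j => (inl (ofAdd (Pi.single j (1 : ℚ))) : GG U) ^ (M j a) := by
        funext j
        simp only [Function.comp_apply, map_zpow, h2]
      rw [hfn, prod_inl_eq]
    have hcol : ((U : Matrix (Fin d) (Fin d) ℚ)).mulVec (Pi.single a (1 : ℚ))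
        = fun k => ((M k a : ℚ)) := by
      rw [hU, Matrix.mulVec_single]
      funext k
      simp [Matrix.map_apply]
    simp only [_root_.map_mul, map_inv, h1, h2, hprod]
    have hcj := conj_pow U 1 (ofAdd (Pi.single a (1 : ℚ)))
    rw [zpow_one, toAdd_ofAdd, hcol] at hcj
    rw [hcj]
    group

lemma conj_pow' (U : (Matrix (Fin d) (Fin d) ℚ)ˣ) (z : ℤ) (n : Multiplicative (Fin d → ℚ)) :
    (inr (ofAdd z) : GG U)⁻¹ * inl n * inr (ofAdd z) =
      inl (ofAdd (((U ^ (-z) : _ˣ) : Matrix (Fin d) (Fin d) ℚ).mulVec n.toAdd)) := by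
  have h := conj_pow U (-z) n
  rw [ofAdd_neg, map_inv, inv_inv] at h
  exact h

lemma key_eq (M : Matrix (Fin d) (Fin d) ℤ) (U : (Matrix (Fin d) (Fin d) ℚ)ˣ)
    (hU : (U : Matrix (Fin d) (Fin d) ℚ) = M.map ((↑) : ℤ → ℚ))
    (i : ℤ) (p q y : ℕ) (u v x : Fin d → ℤ)
    (htw : ((tG d M ^ p)⁻¹ * AG d M u * tG d M ^ p) *
        (tG d M ^ i * ((tG d M ^ y)⁻¹ * AG d M x * tG d M ^ y) * (tG d M ^ i)⁻¹) =
      ((tG d M ^ y)⁻¹ * AG d M x * tG d M ^ y) *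
        ((tG d M ^ q)⁻¹ * AG d M v * tG d M ^ q)) :
    ((U ^ (-(p : ℤ)) : _ˣ) : Matrix (Fin d) (Fin d) ℚ).mulVec (fun k => (u k : ℚ))
      + ((U ^ (i - (y : ℤ)) : _ˣ) : Matrix (Fin d) (Fin d) ℚ).mulVec (fun k => (x k : ℚ))
    = ((U ^ (-(y : ℤ)) : _ˣ) : Matrix (Fin d) (Fin d) ℚ).mulVec (fun k => (x k : ℚ))
      + ((U ^ (-(q : ℤ)) : _ˣ) : Matrix (Fin d) (Fin d) ℚ).mulVec (fun k => (v k : ℚ)) := by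
  set ρ := PresentedGroup.toGroup (rels_eq M U hU) with hρ
  have hρt : ρ (tG d M) = inr (ofAdd (1 : ℤ)) := PresentedGroup.toGroup.of _
  have hρtp : ∀ m : ℕ, ρ (tG d M ^ m) = inr (ofAdd (m : ℤ)) := by
    intro m
    rw [map_pow, hρt, ← map_pow]
    congr 1
    apply toAdd.injective
    rw [toAdd_pow, toAdd_ofAdd]
    simp
  have hρtz : ρ (tG d M ^ i) = inr (ofAdd i) := by
    rw [map_zpow, hρt, ← map_zpow]
    congr 1
    apply toAdd.injective
    rw [toAdd_zpow, toAdd_ofAdd]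
    simp
  have hρA : ∀ c : Fin d → ℤ, ρ (AG d M c) = inl (ofAdd (fun k => (c k : ℚ))) := by
    intro c
    rw [AG, map_list_prod, List.map_map]
    have hfn : (⇑ρ ∘ fun j => aG d M j ^ c j)
        = fun j => (inl (ofAdd (Pi.single j (1 : ℚ))) : GG U) ^ (c j) := by
      funext j
      simp only [Function.comp_apply, map_zpow]
      congr 1
      exact PresentedGroup.toGroup.of _
    rw [hfn, prod_inl_eq]
  have hconj : ∀ (m : ℕ) (c : Fin d → ℤ),
      ρ ((tG d M ^ m)⁻¹ * AG d M c * tG d M ^ m)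
        = inl (ofAdd (((U ^ (-(m : ℤ)) : _ˣ) : Matrix (Fin d) (Fin d) ℚ).mulVec
            (fun k => (c k : ℚ)))) := by
    intro m c
    rw [_root_.map_mul, _root_.map_mul, map_inv, hρtp, hρA, conj_pow']
    rfl
  have emid : ρ (tG d M ^ i * ((tG d M ^ y)⁻¹ * AG d M x * tG d M ^ y) * (tG d M ^ i)⁻¹)
      = inl (ofAdd (((U ^ (i - (y : ℤ)) : _ˣ) : Matrix (Fin d) (Fin d) ℚ).mulVec
          (fun k => (x k : ℚ)))) := by
    rw [_root_.map_mul, _root_.map_mul, map_inv, hρtz, hconj, conj_pow, toAdd_ofAdd,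
      Matrix.mulVec_mulVec, ← Units.val_mul, ← _root_.zpow_add, ← sub_eq_add_neg]
  have h : (inl (ofAdd (((U ^ (-(p : ℤ)) : _ˣ) : Matrix (Fin d) (Fin d) ℚ).mulVec
          (fun k => (u k : ℚ)))) : GG U)
        * inl (ofAdd (((U ^ (i - (y : ℤ)) : _ˣ) : Matrix (Fin d) (Fin d) ℚ).mulVec
          (fun k => (x k : ℚ))))
      = inl (ofAdd (((U ^ (-(y : ℤ)) : _ˣ) : Matrix (Fin d) (Fin d) ℚ).mulVec
          (fun k => (x k : ℚ))))
        * inl (ofAdd (((U ^ (-(q : ℤ)) : _ˣ) : Matrix (Fin d) (Fin d) ℚ).mulVec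
          (fun k => (v k : ℚ)))) := by
    rw [← hconj p u, ← emid, ← hconj y x, ← hconj q v, ← _root_.map_mul, ← _root_.map_mul, htw]
  rw [← _root_.map_mul (inl : _ →* GG U), ← _root_.map_mul (inl : _ →* GG U)] at h
  have h2 := congrArg toAdd (inl_injective h)
  simpa using h2

lemma descend (M : Matrix (Fin d) (Fin d) ℤ) (a b c : ℕ)
    (ha : 1 ≤ a) (hb : 1 ≤ b) (hc : 1 ≤ c) (x s r : Fin d → ℤ)
    (h : (fun k => (x k : ℚ)) =
      ((M.map ((↑) : ℤ → ℚ)) ^ a).mulVec (fun k => (x k : ℚ))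
      + ((M.map ((↑) : ℤ → ℚ)) ^ b).mulVec (fun k => (s k : ℚ))
      - ((M.map ((↑) : ℤ → ℚ)) ^ c).mulVec (fun k => (r k : ℚ))) :
    x = M.mulVec ((M ^ (a - 1)).mulVec x + (M ^ (b - 1)).mulVec s - (M ^ (c - 1)).mulVec r) := by
  set A := M.map ((↑) : ℤ → ℚ) with hA
  have hpowmap : ∀ m : ℕ, (M ^ m).map ((↑) : ℤ → ℚ) = A ^ m := by
    intro m
    simpa [RingHom.mapMatrix_apply] using
      ((Int.castRingHom ℚ).mapMatrix : Matrix (Fin d) (Fin d) ℤ →+* _).map_pow M m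
  have hcast : ∀ (m : ℕ) (z : Fin d → ℤ),
      (fun k => (((M ^ m).mulVec z) k : ℚ)) = (A ^ m).mulVec (fun j => (z j : ℚ)) := by
    intro m z
    funext k
    have h1 : ((((M ^ m).mulVec z) k : ℤ) : ℚ)
        = (((M ^ m).map (Int.castRingHom ℚ)).mulVec ((Int.castRingHom ℚ) ∘ z)) k :=
      RingHom.map_mulVec (Int.castRingHom ℚ) (M ^ m) z k
    rw [h1]
    have h2 : ((M ^ m).map (Int.castRingHom ℚ)) = A ^ m := by
      rw [← hpowmap m]
      rfl
    rw [h2]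
    rfl
  set w : Fin d → ℤ := (M ^ (a - 1)).mulVec x + (M ^ (b - 1)).mulVec s - (M ^ (c - 1)).mulVec r
    with hw
  funext k
  apply Int.cast_injective (α := ℚ)
  show ((x k : ℚ)) = (((M.mulVec w) k : ℤ) : ℚ)
  rw [show (((M.mulVec w) k : ℤ) : ℚ)
      = ((M.map (Int.castRingHom ℚ)).mulVec ((Int.castRingHom ℚ) ∘ w)) k from
    RingHom.map_mulVec (Int.castRingHom ℚ) M w k]
  have hwc : ((Int.castRingHom ℚ) ∘ w)
      = (A ^ (a - 1)).mulVec (fun j => (x j : ℚ))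
        + (A ^ (b - 1)).mulVec (fun j => (s j : ℚ))
        - (A ^ (c - 1)).mulVec (fun j => (r j : ℚ)) := by
    funext j
    have : w j = ((M ^ (a - 1)).mulVec x) j + ((M ^ (b - 1)).mulVec s) j
        - ((M ^ (c - 1)).mulVec r) j := rfl
    show ((w j : ℤ) : ℚ) = _
    rw [this]
    push_cast
    rw [congrFun (hcast (a - 1) x) j, congrFun (hcast (b - 1) s) j,
      congrFun (hcast (c - 1) r) j]
    rfl
  have hMA : M.map (Int.castRingHom ℚ) = A := rfl
  rw [hMA, hwc]
  have hstep : ∀ m : ℕ, 1 ≤ m → A * A ^ (m - 1) = A ^ m := by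
    intro m hm
    rw [← pow_succ']
    congr 1
    omega
  rw [Matrix.mulVec_sub, Matrix.mulVec_add, Matrix.mulVec_mulVec, Matrix.mulVec_mulVec,
    Matrix.mulVec_mulVec, hstep a ha, hstep b hb, hstep c hc]
  exact congrFun h k

end Stmt14Aux

/-- Twisted conjugacy in `A ≤ Γ_M`: if `u = t⁻ᵖ A(𝐮) tᵖ`, `v = t⁻ᑫ A(𝐯) tᑫ`,
`x = t⁻ʸ A(𝐱) tʸ` (with `p, q, y` minimal) satisfy `u · φ_M^i(x) = x · v` with
`i ≠ 0`, then `𝐱 = (Mⁱ − I)⁻¹ (M^{y−q}𝐯 − M^{y−p}𝐮)` (over `ℚ`), and we cannot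
have both `y > q` and `y > p + i`. -/
theorem stmt14 (d : ℕ) (M : Matrix (Fin d) (Fin d) ℤ)
    (hdiag : ∃ P D : Matrix (Fin d) (Fin d) ℝ, IsUnit P ∧ D.IsDiag ∧
      M.map ((↑) : ℤ → ℝ) = P * D * P⁻¹)
    (heig : ∀ μ : ℂ, (M.map ((↑) : ℤ → ℂ)).charpoly.IsRoot μ → 1 < ‖μ‖)
    (i : ℤ) (hi : i ≠ 0)
    (p q y : ℕ) (u v x : Fin d → ℤ)
    (hpmin : 0 < p → ∀ w : Fin d → ℤ, u ≠ M.mulVec w)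
    (hqmin : 0 < q → ∀ w : Fin d → ℤ, v ≠ M.mulVec w)
    (hymin : 0 < y → ∀ w : Fin d → ℤ, x ≠ M.mulVec w)
    (htw : ((tG d M ^ p)⁻¹ * AG d M u * tG d M ^ p) *
        (tG d M ^ i * ((tG d M ^ y)⁻¹ * AG d M x * tG d M ^ y) * (tG d M ^ i)⁻¹) =
      ((tG d M ^ y)⁻¹ * AG d M x * tG d M ^ y) *
        ((tG d M ^ q)⁻¹ * AG d M v * tG d M ^ q)) :
    (fun j => ((x j : ℚ))) =
      (((M.map ((↑) : ℤ → ℚ)) ^ i - 1)⁻¹).mulVec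
        (((M.map ((↑) : ℤ → ℚ)) ^ ((y : ℤ) - (q : ℤ))).mulVec (fun j => ((v j : ℚ))) -
         ((M.map ((↑) : ℤ → ℚ)) ^ ((y : ℤ) - (p : ℤ))).mulVec (fun j => ((u j : ℚ)))) ∧
    ¬((q : ℤ) < (y : ℤ) ∧ (p : ℤ) + i < (y : ℤ)) := by
  classical
  set A := M.map ((↑) : ℤ → ℚ) with hAdef
  -- `det M ≠ 0` since `0` is not an eigenvalue
  have hdetM : (M.det : ℚ) ≠ 0 := by
    have h0 : ¬ (M.map ((↑) : ℤ → ℂ)).charpoly.IsRoot 0 := by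
      intro h
      have := heig 0 h
      norm_num at this
    intro hdq
    have hdz : M.det = 0 := by exact_mod_cast hdq
    apply h0
    show (M.map ((↑) : ℤ → ℂ)).charpoly.eval 0 = 0
    rw [Stmt14Aux.charpoly_eval]
    have hneg : (Matrix.scalar (Fin d) (0 : ℂ)) - M.map ((↑) : ℤ → ℂ)
        = -(M.map ((↑) : ℤ → ℂ)) := by simp
    rw [hneg, Matrix.det_neg]
    have hdc : (M.map ((↑) : ℤ → ℂ)).det = (M.det : ℂ) := by
      simpa [RingHom.mapMatrix_apply] using ((Int.castRingHom ℂ).map_det M).symm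
    rw [hdc, hdz]
    simp
  have hAdet : A.det ≠ 0 := by
    have hd : A.det = (M.det : ℚ) := by
      simpa [RingHom.mapMatrix_apply] using ((Int.castRingHom ℚ).map_det M).symm
    rw [hd]
    exact hdetM
  have hAU : IsUnit A := (Matrix.isUnit_iff_isUnit_det A).mpr hAdet.isUnit
  set U := hAU.unit with hUdef
  have hUval : (U : Matrix (Fin d) (Fin d) ℚ) = A := hAU.unit_spec
  have key := Stmt14Aux.key_eq M U hUval i p q y u v x htw
  have hWmul : ∀ z w : ℤ, ∀ vec : Fin d → ℚ,
      ((U ^ z : _ˣ) : Matrix (Fin d) (Fin d) ℚ).mulVec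
        (((U ^ w : _ˣ) : Matrix (Fin d) (Fin d) ℚ).mulVec vec)
      = ((U ^ (z + w) : _ˣ) : Matrix (Fin d) (Fin d) ℚ).mulVec vec := by
    intro z w vec
    rw [Matrix.mulVec_mulVec, ← Units.val_mul, ← _root_.zpow_add]
  have key2 : ((U ^ ((y : ℤ) - p) : _ˣ) : Matrix (Fin d) (Fin d) ℚ).mulVec (fun k => (u k : ℚ))
      + ((U ^ i : _ˣ) : Matrix (Fin d) (Fin d) ℚ).mulVec (fun k => (x k : ℚ))
      = (fun k => (x k : ℚ))
      + ((U ^ ((y : ℤ) - q) : _ˣ) : Matrix (Fin d) (Fin d) ℚ).mulVec (fun k => (v k : ℚ)) := by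
    have h := congrArg
      (fun w => ((U ^ (y : ℤ) : _ˣ) : Matrix (Fin d) (Fin d) ℚ).mulVec w) key
    simp only [Matrix.mulVec_add, hWmul] at h
    rw [show (y : ℤ) + -(p : ℤ) = (y : ℤ) - p by ring,
      show (y : ℤ) + (i - (y : ℤ)) = i by ring,
      show (y : ℤ) + -(y : ℤ) = 0 by ring,
      show (y : ℤ) + -(q : ℤ) = (y : ℤ) - q by ring] at h
    rw [zpow_zero, Units.val_one, Matrix.one_mulVec] at h
    exact h
  have hW : ∀ z : ℤ, ((U ^ z : _ˣ) : Matrix (Fin d) (Fin d) ℚ) = A ^ z := by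
    intro z
    rw [Matrix.coe_units_zpow, hUval]
  -- invertibility of A^i - 1
  have hBdet : (A ^ i - 1).det ≠ 0 := by
    have hAR : A.map (Rat.castHom ℝ) = M.map ((↑) : ℤ → ℝ) := by
      have hcomp : (⇑(Rat.castHom ℝ) ∘ ((↑) : ℤ → ℚ)) = ((↑) : ℤ → ℝ) := by
        funext z
        simp
      rw [hAdef, Matrix.map_map, hcomp]
    have hmap : (A ^ i - 1).map (Rat.castHom ℝ) = (M.map ((↑) : ℤ → ℝ)) ^ i - 1 := by
      have hsub := ((Rat.castHom ℝ).mapMatrix :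
        Matrix (Fin d) (Fin d) ℚ →+* Matrix (Fin d) (Fin d) ℝ).map_sub (A ^ i) 1
      simp only [map_one, RingHom.mapMatrix_apply] at hsub
      rw [hsub, Stmt14Aux.map_zpow' (Rat.castHom ℝ) A i, hAR]
    have hR := Stmt14Aux.eigen_abs hdiag heig i hi
    intro hB0
    apply hR
    have hdet2 : ((A ^ i - 1).map (Rat.castHom ℝ)).det = (((A ^ i - 1).det : ℚ) : ℝ) := by
      rw [show ((A ^ i - 1).map (Rat.castHom ℝ))
          = (Rat.castHom ℝ).mapMatrix (A ^ i - 1) from rfl, ← RingHom.map_det]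
      rfl
    rw [← hmap, hdet2, hB0]
    simp
  constructor
  · -- the explicit formula
    have hBx : (A ^ i - 1).mulVec (fun k => (x k : ℚ))
        = (A ^ ((y : ℤ) - q)).mulVec (fun k => (v k : ℚ))
          - (A ^ ((y : ℤ) - p)).mulVec (fun k => (u k : ℚ)) := by
      rw [Matrix.sub_mulVec, Matrix.one_mulVec, ← hW i, ← hW ((y : ℤ) - q), ← hW ((y : ℤ) - p)]
      linear_combination key2
    have hBinv : (A ^ i - 1)⁻¹ * (A ^ i - 1) = 1 :=
      Matrix.nonsing_inv_mul _ hBdet.isUnit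
    calc (fun j => ((x j : ℚ)))
        = ((A ^ i - 1)⁻¹ * (A ^ i - 1)).mulVec (fun j => (x j : ℚ)) := by
          rw [hBinv, Matrix.one_mulVec]
      _ = ((A ^ i - 1)⁻¹).mulVec ((A ^ i - 1).mulVec (fun j => (x j : ℚ))) :=
          (Matrix.mulVec_mulVec _ _ _).symm
      _ = _ := by rw [hBx]
  · rintro ⟨hqy, hpy⟩
    have hy0 : 0 < y := by omega
    rcases lt_or_gt_of_ne hi with hineg | hipos
    · -- i < 0
      have key3 : ((U ^ ((y : ℤ) - p - i) : _ˣ) : Matrix (Fin d) (Fin d) ℚ).mulVec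
            (fun k => (u k : ℚ))
          + (fun k => (x k : ℚ))
          = ((U ^ (-i) : _ˣ) : Matrix (Fin d) (Fin d) ℚ).mulVec (fun k => (x k : ℚ))
          + ((U ^ ((y : ℤ) - q - i) : _ˣ) : Matrix (Fin d) (Fin d) ℚ).mulVec
            (fun k => (v k : ℚ)) := by
        have h := congrArg
          (fun w => ((U ^ (-i) : _ˣ) : Matrix (Fin d) (Fin d) ℚ).mulVec w) key2
        simp only [Matrix.mulVec_add, hWmul] at h
        rw [show -i + ((y : ℤ) - p) = (y : ℤ) - p - i by ring,
          show -i + i = 0 by ring,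
          show -i + ((y : ℤ) - q) = (y : ℤ) - q - i by ring] at h
        rw [zpow_zero, Units.val_one, Matrix.one_mulVec] at h
        exact h
      set a : ℕ := (-i).toNat with hadef
      set b : ℕ := ((y : ℤ) - q - i).toNat with hbdef
      set c : ℕ := ((y : ℤ) - p - i).toNat with hcdef
      have ha : 1 ≤ a := by omega
      have hb : 1 ≤ b := by omega
      have hc : 1 ≤ c := by omega
      have hQ : (fun k => (x k : ℚ)) =
          (A ^ a).mulVec (fun k => (x k : ℚ))
          + (A ^ b).mulVec (fun k => (v k : ℚ))
          - (A ^ c).mulVec (fun k => (u k : ℚ)) := by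
        have e1 : -i = (a : ℤ) := by omega
        have e2 : (y : ℤ) - q - i = (b : ℤ) := by omega
        have e3 : (y : ℤ) - p - i = (c : ℤ) := by omega
        rw [← zpow_natCast A a, ← zpow_natCast A b, ← zpow_natCast A c,
          ← e1, ← e2, ← e3, ← hW (-i), ← hW ((y : ℤ) - q - i), ← hW ((y : ℤ) - p - i)]
        linear_combination key3
      exact hymin hy0 _ (Stmt14Aux.descend M a b c ha hb hc x v u hQ)
    · -- i > 0
      set a : ℕ := i.toNat with hadef
      set b : ℕ := ((y : ℤ) - p).toNat with hbdef
      set c : ℕ := ((y : ℤ) - q).toNat with hcdef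
      have ha : 1 ≤ a := by omega
      have hb : 1 ≤ b := by omega
      have hc : 1 ≤ c := by omega
      have hQ : (fun k => (x k : ℚ)) =
          (A ^ a).mulVec (fun k => (x k : ℚ))
          + (A ^ b).mulVec (fun k => (u k : ℚ))
          - (A ^ c).mulVec (fun k => (v k : ℚ)) := by
        have e1 : i = (a : ℤ) := by omega
        have e2 : (y : ℤ) - p = (b : ℤ) := by omega
        have e3 : (y : ℤ) - q = (c : ℤ) := by omega
        rw [← zpow_natCast A a, ← zpow_natCast A b, ← zpow_natCast A c,
          ← e1, ← e2, ← e3, ← hW i, ← hW ((y : ℤ) - p), ← hW ((y : ℤ) - q)]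
        linear_combination -key2
      exact hymin hy0 _ (Stmt14Aux.descend M a b c ha hb hc x u v hQ)
end
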